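/- Let 𝓛 ∈ ℝ^{N×N} be a symmetric positive semidefinite matrix (a graph Laplacian), E a diagonal 0/1 matrix, r ∈ ℝ^{Nd}, and ψ ∈ S(m_ψ, L_ψ) with 0 < m_ψ ≤ L_ψ. Define f(y) = ½ (y−r)ᵀ(𝓛 ⊗ I_d)(y−r) + Σ_{i : E_{ii}=1} ψ(y_i). Then, for constants 0 < m ≤ L, the following are equivalent: (1) f ∈ S(m,L) for every ψ ∈ S(m_ψ, L_ψ); (2) m·I ⪯ 𝓛 + m_ψ·E and 𝓛 + L_ψ·E ⪯ L·I. -/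

import Mathlib

open Matrix
open scoped Kronecker RealInnerProductSpace

def memS {E : Type*} [NormedAddCommGroup E] [InnerProductSpace ℝ E] [CompleteSpace E]
    (m L : ℝ) (f : E → ℝ) : Prop :=
  ContDiff ℝ 1 f ∧
    ∀ y₁ y₂ : E,
      m * ‖y₁ - y₂‖ ^ 2 ≤ (inner ℝ (gradient f y₁ - gradient f y₂) (y₁ - y₂) : ℝ) ∧
      (inner ℝ (gradient f y₁ - gradient f y₂) (y₁ - y₂) : ℝ) ≤ L * ‖y₁ - y₂‖ ^ 2

/-- The source-seeking objective `f(y) = ½(y−r)ᵀ(𝓛⊗I_d)(y−r) + Σ_{i∈𝓥_l} ψ(y_i)`. -/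
noncomputable def bigf {N d : ℕ} (𝓛 : Matrix (Fin N) (Fin N) ℝ)
    (r : EuclideanSpace ℝ (Fin N × Fin d)) (Vl : Finset (Fin N))
    (ψ : EuclideanSpace ℝ (Fin d) → ℝ) (y : EuclideanSpace ℝ (Fin N × Fin d)) : ℝ :=
  (1 / 2) * ((fun p => y p - r p) ⬝ᵥ
      (𝓛 ⊗ₖ (1 : Matrix (Fin d) (Fin d) ℝ)).mulVec (fun p => y p - r p))
    + ∑ i ∈ Vl, ψ (WithLp.toLp 2 (fun j => y (i, j)))

variable {N d : ℕ}

-- projection CLM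
noncomputable def projCLM (N d : ℕ) (i : Fin N) :
    EuclideanSpace ℝ (Fin N × Fin d) →L[ℝ] EuclideanSpace ℝ (Fin d) :=
  LinearMap.toContinuousLinearMap
    { toFun := fun y => (WithLp.toLp 2 (fun j => y (i, j)) : EuclideanSpace ℝ (Fin d))
      map_add' := fun _ _ => rfl
      map_smul' := fun _ _ => rfl }

@[simp] lemma projCLM_apply (i : Fin N) (y : EuclideanSpace ℝ (Fin N × Fin d)) (j : Fin d) :
    projCLM N d i y j = y (i, j) := rfl

noncomputable def TCLM (𝓛 : Matrix (Fin N) (Fin N) ℝ) (d : ℕ) :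
    EuclideanSpace ℝ (Fin N × Fin d) →L[ℝ] EuclideanSpace ℝ (Fin N × Fin d) :=
  Matrix.toEuclideanCLM (𝕜 := ℝ) (𝓛 ⊗ₖ (1 : Matrix (Fin d) (Fin d) ℝ))

@[simp] lemma TCLM_apply (𝓛 : Matrix (Fin N) (Fin N) ℝ) (y : EuclideanSpace ℝ (Fin N × Fin d)) (p) :
    TCLM 𝓛 d y p = (𝓛 ⊗ₖ (1 : Matrix (Fin d) (Fin d) ℝ)).mulVec y p := by
  have := Matrix.ofLp_toEuclideanCLM (𝕜 := ℝ) (𝓛 ⊗ₖ (1 : Matrix (Fin d) (Fin d) ℝ)) y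
  exact congrFun this p

lemma inner_eq_dot (u v : EuclideanSpace ℝ (Fin N × Fin d)) :
    ⟪u, v⟫ = (fun p => u p) ⬝ᵥ (fun p => v p) := by
  simp [PiLp.inner_apply, dotProduct, mul_comm]

lemma dot_T (u v : EuclideanSpace ℝ (Fin N × Fin d)) (𝓛 : Matrix (Fin N) (Fin N) ℝ) :
    ⟪u, TCLM 𝓛 d v⟫ = (fun p => u p) ⬝ᵥ (𝓛 ⊗ₖ (1 : Matrix (Fin d) (Fin d) ℝ)).mulVec (fun p => v p) := by
  simp [PiLp.inner_apply, dotProduct, mul_comm]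

-- symmetry of T when 𝓛 symmetric
lemma T_symm (𝓛 : Matrix (Fin N) (Fin N) ℝ) (h : 𝓛.IsSymm)
    (u v : EuclideanSpace ℝ (Fin N × Fin d)) :
    ⟪TCLM 𝓛 d u, v⟫ = ⟪u, TCLM 𝓛 d v⟫ := by
  have hsym : (𝓛 ⊗ₖ (1 : Matrix (Fin d) (Fin d) ℝ)).IsSymm := by
    rw [Matrix.IsSymm, ← Matrix.kroneckerMap_transpose, h, Matrix.transpose_one]
  have : ∀ w z : Fin N × Fin d → ℝ, ((𝓛 ⊗ₖ (1:Matrix (Fin d) (Fin d) ℝ)) *ᵥ w) ⬝ᵥ z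
      = w ⬝ᵥ ((𝓛 ⊗ₖ (1:Matrix (Fin d) (Fin d) ℝ)) *ᵥ z) := by
    intro w z
    rw [Matrix.dotProduct_mulVec, ← Matrix.mulVec_transpose, hsym,
      dotProduct_comm]
  have h1 : ⟪TCLM 𝓛 d u, v⟫ = ((𝓛 ⊗ₖ (1:Matrix (Fin d) (Fin d) ℝ)) *ᵥ (fun p => u p)) ⬝ᵥ (fun p => v p) := by
    simp [PiLp.inner_apply, dotProduct, mul_comm]
  rw [h1, this, dot_T]

noncomputable def gradF (𝓛 : Matrix (Fin N) (Fin N) ℝ)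
    (r : EuclideanSpace ℝ (Fin N × Fin d)) (Vl : Finset (Fin N))
    (ψ : EuclideanSpace ℝ (Fin d) → ℝ) (y : EuclideanSpace ℝ (Fin N × Fin d)) :
    EuclideanSpace ℝ (Fin N × Fin d) :=
  WithLp.toLp 2 fun p => (𝓛 ⊗ₖ (1 : Matrix (Fin d) (Fin d) ℝ)).mulVec (fun q => y q - r q) p +
    (if p.1 ∈ Vl then gradient ψ (projCLM N d p.1 y) p.2 else 0)

lemma bigf_eq (𝓛 : Matrix (Fin N) (Fin N) ℝ) (r : EuclideanSpace ℝ (Fin N × Fin d))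
    (Vl : Finset (Fin N)) (ψ : EuclideanSpace ℝ (Fin d) → ℝ) :
    bigf 𝓛 r Vl ψ = fun y =>
      (1 / 2 : ℝ) * ⟪y - r, TCLM 𝓛 d (y - r)⟫ + ∑ i ∈ Vl, ψ (projCLM N d i y) := by
  funext y
  rw [bigf, dot_T]
  rfl

lemma hasGradientAt_bigf (𝓛 : Matrix (Fin N) (Fin N) ℝ) (h𝓛sym : 𝓛.IsSymm)
    (r : EuclideanSpace ℝ (Fin N × Fin d)) (Vl : Finset (Fin N))
    (ψ : EuclideanSpace ℝ (Fin d) → ℝ) (hψ : ContDiff ℝ 1 ψ)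
    (y : EuclideanSpace ℝ (Fin N × Fin d)) :
    HasGradientAt (bigf 𝓛 r Vl ψ) (gradF 𝓛 r Vl ψ y) y := by
  rw [hasGradientAt_iff_hasFDerivAt, bigf_eq]
  -- derivative of quadratic part
  have h1 : HasFDerivAt (fun z : EuclideanSpace ℝ (Fin N × Fin d) => z - r)
      (ContinuousLinearMap.id ℝ _) y := (hasFDerivAt_id y).sub_const r
  have h2 : HasFDerivAt (fun z : EuclideanSpace ℝ (Fin N × Fin d) => TCLM 𝓛 d (z - r))
      (TCLM 𝓛 d) y := by
    have h2' := ((TCLM 𝓛 d).hasFDerivAt (x := y - r)).comp y h1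
    simp only [ContinuousLinearMap.comp_id] at h2'
    exact h2'
  have hq := (h1.inner ℝ h2).const_mul (1/2 : ℝ)
  -- derivative of each ψ term
  have hs : ∀ i ∈ Vl, HasFDerivAt (fun z : EuclideanSpace ℝ (Fin N × Fin d) => ψ (projCLM N d i z))
      (((InnerProductSpace.toDual ℝ (EuclideanSpace ℝ (Fin d)))
          (gradient ψ (projCLM N d i y))).comp (projCLM N d i)) y := by
    intro i _
    have hg := (hψ.differentiable one_ne_zero (projCLM N d i y)).hasGradientAt
    rw [hasGradientAt_iff_hasFDerivAt] at hg
    exact hg.comp y ((projCLM N d i).hasFDerivAt)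
  have hsum := HasFDerivAt.sum hs
  have htot := hq.add hsum
  have hD : (InnerProductSpace.toDual ℝ (EuclideanSpace ℝ (Fin N × Fin d))) (gradF 𝓛 r Vl ψ y)
      = (1 / 2 : ℝ) • ((fderivInnerCLM ℝ (y - r, TCLM 𝓛 d (y - r))).comp
          ((ContinuousLinearMap.id ℝ (EuclideanSpace ℝ (Fin N × Fin d))).prod (TCLM 𝓛 d)))
        + ∑ i ∈ Vl, (((InnerProductSpace.toDual ℝ (EuclideanSpace ℝ (Fin d)))
            (gradient ψ (projCLM N d i y))).comp (projCLM N d i)) := by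
    ext z
    simp only [InnerProductSpace.toDual_apply_apply, ContinuousLinearMap.add_apply,
      ContinuousLinearMap.coe_comp', Function.comp_apply, ContinuousLinearMap.coe_sum',
      Finset.sum_apply, ContinuousLinearMap.coe_smul', Pi.smul_apply,
      ContinuousLinearMap.smul_apply, fderivInnerCLM_apply, ContinuousLinearMap.prod_apply,
      ContinuousLinearMap.id_apply]
    rw [← T_symm 𝓛 h𝓛sym (y - r) z, real_inner_comm z ((TCLM 𝓛 d) (y - r))]
    have hL : ⟪gradF 𝓛 r Vl ψ y, z⟫ = ⟪TCLM 𝓛 d (y - r), z⟫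
        + ∑ i ∈ Vl, ⟪gradient ψ (projCLM N d i y), projCLM N d i z⟫ := by
      simp only [PiLp.inner_apply, RCLike.inner_apply, conj_trivial, gradF, WithLp.ofLp_toLp, TCLM_apply,
        projCLM_apply, mul_add]
      rw [Finset.sum_add_distrib]
      congr 1
      rw [Fintype.sum_prod_type,
        show (∑ i ∈ Vl, ∑ j, z (i, j) * gradient ψ (projCLM N d i y) j)
          = ∑ i : Fin N, if i ∈ Vl then ∑ j, z (i, j) * gradient ψ (projCLM N d i y) j else 0 by
          rw [Finset.sum_ite_mem, Finset.univ_inter]]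
      exact Finset.sum_congr rfl fun i _ => by split <;> simp
    rw [hL, smul_eq_mul]
    rw [real_inner_comm z ((TCLM 𝓛 d) (y - r))]
    ring
  rw [hD]
  rw [Finset.sum_fn] at htot
  exact htot


lemma contDiff_bigf (𝓛 : Matrix (Fin N) (Fin N) ℝ) (r : EuclideanSpace ℝ (Fin N × Fin d))
    (Vl : Finset (Fin N)) (ψ : EuclideanSpace ℝ (Fin d) → ℝ) (hψ : ContDiff ℝ 1 ψ) :
    ContDiff ℝ 1 (bigf 𝓛 r Vl ψ) := by
  rw [bigf_eq]
  apply ContDiff.add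
  · exact contDiff_const.mul ((contDiff_id.sub contDiff_const).inner ℝ
      ((TCLM 𝓛 d).contDiff.comp (contDiff_id.sub contDiff_const)))
  · exact ContDiff.sum fun i _ => hψ.comp (projCLM N d i).contDiff

lemma kron_quad (M : Matrix (Fin N) (Fin N) ℝ) (z : Fin N × Fin d → ℝ) :
    z ⬝ᵥ (M ⊗ₖ (1 : Matrix (Fin d) (Fin d) ℝ)).mulVec z
      = ∑ j : Fin d, (fun i => z (i, j)) ⬝ᵥ M.mulVec (fun i => z (i, j)) := by
  simp only [dotProduct, Matrix.mulVec, Fintype.sum_prod_type,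
    Matrix.kroneckerMap_apply, Matrix.one_apply, mul_ite, mul_one, mul_zero, ite_mul, zero_mul,
    Finset.sum_ite_eq, Finset.sum_ite_eq', Finset.mem_univ, if_true]
  exact Finset.sum_comm

lemma E_quad (Vl : Finset (Fin N)) (x : Fin N → ℝ) :
    x ⬝ᵥ (Matrix.diagonal fun i => if i ∈ Vl then (1:ℝ) else 0).mulVec x
      = ∑ i ∈ Vl, x i ^ 2 := by
  simp only [Matrix.mulVec_diagonal, dotProduct, ite_mul, one_mul, zero_mul, mul_ite,
    mul_zero, mul_one]
  rw [Finset.sum_ite_mem, Finset.univ_inter]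
  exact Finset.sum_congr rfl fun i _ => (sq (x i)) ▸ (pow_two (x i)).symm

lemma psd_quad_le {P : Matrix (Fin N) (Fin N) ℝ}
    (h : (P - (c : ℝ) • (1 : Matrix (Fin N) (Fin N) ℝ)).PosSemidef) (x : Fin N → ℝ) :
    c * (x ⬝ᵥ x) ≤ x ⬝ᵥ P.mulVec x := by
  have h2 := (posSemidef_iff_dotProduct_mulVec.1 h).2 x
  simp only [Matrix.sub_mulVec, Matrix.smul_mulVec, Matrix.one_mulVec, star_trivial,
    dotProduct_sub, dotProduct_smul, smul_eq_mul] at h2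
  linarith

lemma psd_quad_ge {P : Matrix (Fin N) (Fin N) ℝ}
    (h : ((c : ℝ) • (1 : Matrix (Fin N) (Fin N) ℝ) - P).PosSemidef) (x : Fin N → ℝ) :
    x ⬝ᵥ P.mulVec x ≤ c * (x ⬝ᵥ x) := by
  have h2 := (posSemidef_iff_dotProduct_mulVec.1 h).2 x
  simp only [Matrix.sub_mulVec, Matrix.smul_mulVec, Matrix.one_mulVec, star_trivial,
    dotProduct_sub, dotProduct_smul, smul_eq_mul] at h2
  linarith

lemma hasGradientAt_quad (c : ℝ) (x : EuclideanSpace ℝ (Fin d)) :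
    HasGradientAt (fun z : EuclideanSpace ℝ (Fin d) => c / 2 * ⟪z, z⟫) (c • x) x := by
  rw [hasGradientAt_iff_hasFDerivAt]
  have h := ((hasFDerivAt_id x).inner ℝ (hasFDerivAt_id x)).const_mul (c/2)
  have hD : (InnerProductSpace.toDual ℝ (EuclideanSpace ℝ (Fin d))) (c • x)
      = (c/2) • ((fderivInnerCLM ℝ (x, x)).comp
          ((ContinuousLinearMap.id ℝ _).prod (ContinuousLinearMap.id ℝ _))) := by
    ext z
    simp only [InnerProductSpace.toDual_apply_apply, ContinuousLinearMap.smul_apply,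
      ContinuousLinearMap.coe_comp', Function.comp_apply, fderivInnerCLM_apply,
      ContinuousLinearMap.prod_apply, ContinuousLinearMap.id_apply, smul_eq_mul,
      real_inner_smul_left]
    rw [real_inner_comm z x]
    ring
  rw [hD]; exact h

lemma gradient_quad (c : ℝ) (x : EuclideanSpace ℝ (Fin d)) :
    gradient (fun z : EuclideanSpace ℝ (Fin d) => c / 2 * ⟪z, z⟫) x = c • x :=
  (hasGradientAt_quad c x).gradient

lemma memS_quad (c mψ Lψ : ℝ) (h1 : mψ ≤ c) (h2 : c ≤ Lψ) :
    memS mψ Lψ (fun z : EuclideanSpace ℝ (Fin d) => c / 2 * ⟪z, z⟫) := by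
  constructor
  · exact contDiff_const.mul (contDiff_id.inner ℝ contDiff_id)
  · intro y₁ y₂
    rw [gradient_quad, gradient_quad, ← smul_sub, real_inner_smul_left,
      real_inner_self_eq_norm_sq]
    constructor <;> nlinarith [sq_nonneg ‖y₁ - y₂‖]

lemma inner_grad_bigf (𝓛 : Matrix (Fin N) (Fin N) ℝ) (h𝓛sym : 𝓛.IsSymm)
    (r : EuclideanSpace ℝ (Fin N × Fin d)) (Vl : Finset (Fin N))
    (ψ : EuclideanSpace ℝ (Fin d) → ℝ) (hψ : ContDiff ℝ 1 ψ)
    (y₁ y₂ : EuclideanSpace ℝ (Fin N × Fin d)) :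
    (inner ℝ (gradient (bigf 𝓛 r Vl ψ) y₁ - gradient (bigf 𝓛 r Vl ψ) y₂) (y₁ - y₂) : ℝ)
      = (fun p => y₁ p - y₂ p) ⬝ᵥ
          (𝓛 ⊗ₖ (1 : Matrix (Fin d) (Fin d) ℝ)).mulVec (fun p => y₁ p - y₂ p)
        + ∑ i ∈ Vl, ⟪gradient ψ (projCLM N d i y₁) - gradient ψ (projCLM N d i y₂),
            projCLM N d i y₁ - projCLM N d i y₂⟫ := by
  rw [(hasGradientAt_bigf 𝓛 h𝓛sym r Vl ψ hψ y₁).gradient,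
      (hasGradientAt_bigf 𝓛 h𝓛sym r Vl ψ hψ y₂).gradient, real_inner_comm]
  have hsub : ∀ p, (𝓛 ⊗ₖ (1 : Matrix (Fin d) (Fin d) ℝ)).mulVec (fun q => y₁ q - r q) p
        - (𝓛 ⊗ₖ (1 : Matrix (Fin d) (Fin d) ℝ)).mulVec (fun q => y₂ q - r q) p
      = (𝓛 ⊗ₖ (1 : Matrix (Fin d) (Fin d) ℝ)).mulVec (fun q => y₁ q - y₂ q) p := by
    intro p
    simp only [Matrix.mulVec, dotProduct, ← Finset.sum_sub_distrib]
    exact Finset.sum_congr rfl fun q _ => by ring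
  simp only [PiLp.inner_apply, RCLike.inner_apply, conj_trivial, PiLp.sub_apply, gradF, WithLp.ofLp_toLp,
    projCLM_apply]
  have step1 : (∑ p : Fin N × Fin d,
        (((𝓛 ⊗ₖ (1 : Matrix (Fin d) (Fin d) ℝ)).mulVec (fun q => y₁ q - r q) p
            + (if p.1 ∈ Vl then gradient ψ (projCLM N d p.1 y₁) p.2 else 0))
          - ((𝓛 ⊗ₖ (1 : Matrix (Fin d) (Fin d) ℝ)).mulVec (fun q => y₂ q - r q) p
            + (if p.1 ∈ Vl then gradient ψ (projCLM N d p.1 y₂) p.2 else 0))) * (y₁ p - y₂ p))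
      = (∑ p : Fin N × Fin d,
          (𝓛 ⊗ₖ (1 : Matrix (Fin d) (Fin d) ℝ)).mulVec (fun q => y₁ q - y₂ q) p * (y₁ p - y₂ p))
        + (∑ p : Fin N × Fin d,
            (if p.1 ∈ Vl then
              (gradient ψ (projCLM N d p.1 y₁) p.2 - gradient ψ (projCLM N d p.1 y₂) p.2)
                * (y₁ p - y₂ p) else 0)) := by
    rw [← Finset.sum_add_distrib]
    refine Finset.sum_congr rfl fun p _ => ?_
    rw [← hsub p]
    by_cases hp : p.1 ∈ Vl <;> simp [hp] <;> ring
  rw [step1]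
  congr 1
  · rw [dotProduct]
    exact Finset.sum_congr rfl fun p _ => mul_comm _ _
  · rw [Fintype.sum_prod_type,
      show (∑ i ∈ Vl, ∑ j, (y₁ (i, j) - y₂ (i, j))
              * (gradient ψ (projCLM N d i y₁) j - gradient ψ (projCLM N d i y₂) j))
        = ∑ i : Fin N, if i ∈ Vl then
            ∑ j, (y₁ (i, j) - y₂ (i, j))
              * (gradient ψ (projCLM N d i y₁) j - gradient ψ (projCLM N d i y₂) j) else 0 by
        rw [Finset.sum_ite_mem, Finset.univ_inter]]
    exact Finset.sum_congr rfl fun i _ => by split <;> simp [mul_comm]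

lemma norm_sq_eq (y₁ y₂ : EuclideanSpace ℝ (Fin N × Fin d)) :
    ‖y₁ - y₂‖ ^ 2
      = ∑ j : Fin d, (fun i => y₁ (i, j) - y₂ (i, j)) ⬝ᵥ (fun i => y₁ (i, j) - y₂ (i, j)) := by
  rw [← real_inner_self_eq_norm_sq]
  simp only [PiLp.inner_apply, RCLike.inner_apply, conj_trivial, PiLp.sub_apply,
    dotProduct, Fintype.sum_prod_type]
  exact Finset.sum_comm

lemma sum_proj_norm (Vl : Finset (Fin N)) (y₁ y₂ : EuclideanSpace ℝ (Fin N × Fin d)) :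
    ∑ i ∈ Vl, ‖projCLM N d i y₁ - projCLM N d i y₂‖ ^ 2
      = ∑ j : Fin d, (fun i => y₁ (i, j) - y₂ (i, j)) ⬝ᵥ
          (Matrix.diagonal fun i => if i ∈ Vl then (1:ℝ) else 0).mulVec
            (fun i => y₁ (i, j) - y₂ (i, j)) := by
  have : ∀ j : Fin d, (fun i => y₁ (i, j) - y₂ (i, j)) ⬝ᵥ
          (Matrix.diagonal fun i => if i ∈ Vl then (1:ℝ) else 0).mulVec
            (fun i => y₁ (i, j) - y₂ (i, j)) = ∑ i ∈ Vl, (y₁ (i, j) - y₂ (i, j)) ^ 2 :=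
    fun j => E_quad Vl _
  rw [Finset.sum_congr rfl fun j _ => this j, Finset.sum_comm]
  refine Finset.sum_congr rfl fun i _ => ?_
  rw [← real_inner_self_eq_norm_sq]
  simp only [PiLp.inner_apply, RCLike.inner_apply, conj_trivial, PiLp.sub_apply, projCLM_apply, sq]

lemma backward (𝓛 : Matrix (Fin N) (Fin N) ℝ) (h𝓛sym : 𝓛.IsSymm)
    (Vl : Finset (Fin N)) (r : EuclideanSpace ℝ (Fin N × Fin d))
    (mψ Lψ m L : ℝ)
    (E : Matrix (Fin N) (Fin N) ℝ)
    (hE : E = Matrix.diagonal fun i => if i ∈ Vl then (1 : ℝ) else 0)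
    (h1 : ((𝓛 + mψ • E) - m • (1 : Matrix (Fin N) (Fin N) ℝ)).PosSemidef)
    (h2 : (L • (1 : Matrix (Fin N) (Fin N) ℝ) - (𝓛 + Lψ • E)).PosSemidef)
    (ψ : EuclideanSpace ℝ (Fin d) → ℝ) (hψ : memS mψ Lψ ψ) :
    memS m L (bigf 𝓛 r Vl ψ) := by
  refine ⟨contDiff_bigf 𝓛 r Vl ψ hψ.1, fun y₁ y₂ => ?_⟩
  rw [inner_grad_bigf 𝓛 h𝓛sym r Vl ψ hψ.1 y₁ y₂]
  set w : Fin d → Fin N → ℝ := fun j i => y₁ (i, j) - y₂ (i, j) with hw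
  have hkron : (fun p => y₁ p - y₂ p) ⬝ᵥ
        (𝓛 ⊗ₖ (1 : Matrix (Fin d) (Fin d) ℝ)).mulVec (fun p => y₁ p - y₂ p)
      = ∑ j : Fin d, w j ⬝ᵥ 𝓛.mulVec (w j) := kron_quad 𝓛 _
  have hnorm : ‖y₁ - y₂‖ ^ 2 = ∑ j : Fin d, w j ⬝ᵥ w j := norm_sq_eq y₁ y₂
  have hEsum : ∑ i ∈ Vl, ‖projCLM N d i y₁ - projCLM N d i y₂‖ ^ 2
      = ∑ j : Fin d, w j ⬝ᵥ E.mulVec (w j) := by rw [hE]; exact sum_proj_norm Vl y₁ y₂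
  -- bounds on ψ sum
  have hlow : mψ * ∑ i ∈ Vl, ‖projCLM N d i y₁ - projCLM N d i y₂‖ ^ 2
      ≤ ∑ i ∈ Vl, ⟪gradient ψ (projCLM N d i y₁) - gradient ψ (projCLM N d i y₂),
          projCLM N d i y₁ - projCLM N d i y₂⟫ := by
    rw [Finset.mul_sum]
    exact Finset.sum_le_sum fun i _ => (hψ.2 (projCLM N d i y₁) (projCLM N d i y₂)).1
  have hhigh : (∑ i ∈ Vl, ⟪gradient ψ (projCLM N d i y₁) - gradient ψ (projCLM N d i y₂),
          projCLM N d i y₁ - projCLM N d i y₂⟫)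
      ≤ Lψ * ∑ i ∈ Vl, ‖projCLM N d i y₁ - projCLM N d i y₂‖ ^ 2 := by
    rw [Finset.mul_sum]
    exact Finset.sum_le_sum fun i _ => (hψ.2 (projCLM N d i y₁) (projCLM N d i y₂)).2
  have key : ∀ (c : ℝ) (j : Fin d), w j ⬝ᵥ (𝓛 + c • E).mulVec (w j)
      = w j ⬝ᵥ 𝓛.mulVec (w j) + c * (w j ⬝ᵥ E.mulVec (w j)) := by
    intro c j
    rw [Matrix.add_mulVec, dotProduct_add, Matrix.smul_mulVec,
      dotProduct_smul, smul_eq_mul]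
  rw [hEsum] at hlow hhigh
  rw [hkron, hnorm]
  constructor
  · have hj : ∀ j : Fin d, m * (w j ⬝ᵥ w j)
        ≤ w j ⬝ᵥ 𝓛.mulVec (w j) + mψ * (w j ⬝ᵥ E.mulVec (w j)) := by
      intro j
      rw [← key mψ j]
      exact psd_quad_le h1 (w j)
    have hsum := Finset.sum_le_sum fun j (_ : j ∈ Finset.univ) => hj j
    rw [Finset.sum_add_distrib, ← Finset.mul_sum, ← Finset.mul_sum] at hsum
    linarith
  · have hj : ∀ j : Fin d, w j ⬝ᵥ 𝓛.mulVec (w j) + Lψ * (w j ⬝ᵥ E.mulVec (w j))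
        ≤ L * (w j ⬝ᵥ w j) := by
      intro j
      rw [← key Lψ j]
      exact psd_quad_ge h2 (w j)
    have hsum := Finset.sum_le_sum fun j (_ : j ∈ Finset.univ) => hj j
    rw [Finset.sum_add_distrib, ← Finset.mul_sum, ← Finset.mul_sum] at hsum
    linarith

lemma quad_add (M E : Matrix (Fin N) (Fin N) ℝ) (c : ℝ) (v : Fin N → ℝ) :
    v ⬝ᵥ (M + c • E).mulVec v = v ⬝ᵥ M.mulVec v + c * (v ⬝ᵥ E.mulVec v) := by
  rw [Matrix.add_mulVec, dotProduct_add, Matrix.smul_mulVec,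
    dotProduct_smul, smul_eq_mul]

lemma forward_quad [NeZero d] (𝓛 : Matrix (Fin N) (Fin N) ℝ) (h𝓛sym : 𝓛.IsSymm)
    (Vl : Finset (Fin N)) (r : EuclideanSpace ℝ (Fin N × Fin d))
    (E : Matrix (Fin N) (Fin N) ℝ)
    (hE : E = Matrix.diagonal fun i => if i ∈ Vl then (1 : ℝ) else 0)
    (c m L : ℝ)
    (hf : memS m L (bigf 𝓛 r Vl (fun z : EuclideanSpace ℝ (Fin d) => c / 2 * ⟪z, z⟫)))
    (x : Fin N → ℝ) :
    m * (x ⬝ᵥ x) ≤ x ⬝ᵥ (𝓛 + c • E).mulVec x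
      ∧ x ⬝ᵥ (𝓛 + c • E).mulVec x ≤ L * (x ⬝ᵥ x) := by
  set ψc : EuclideanSpace ℝ (Fin d) → ℝ := fun z => c / 2 * ⟪z, z⟫ with hψc
  have hcont : ContDiff ℝ 1 ψc := contDiff_const.mul (contDiff_id.inner ℝ contDiff_id)
  set e : EuclideanSpace ℝ (Fin N × Fin d) := WithLp.toLp 2 (fun p => if p.2 = 0 then x p.1 else 0) with he
  have h12 := hf.2 (r + e) r
  rw [inner_grad_bigf 𝓛 h𝓛sym r Vl ψc hcont (r + e) r] at h12
  have hsingle : ∀ (M : Matrix (Fin N) (Fin N) ℝ) (j : Fin d),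
      ((fun i => if j = 0 then x i else 0) ⬝ᵥ M.mulVec (fun i => if j = 0 then x i else 0))
        = if j = 0 then x ⬝ᵥ M.mulVec x else 0 := by
    intro M j
    by_cases hj : j = 0 <;> simp [hj, dotProduct]
  have hw : ∀ j : Fin d, (fun i => (r + e) (i, j) - r (i, j))
      = fun i => if j = 0 then x i else 0 := by
    intro j; funext i; simp [he, PiLp.add_apply]
  -- kronecker term
  have hk : ((fun p => (r + e) p - r p) ⬝ᵥ
        (𝓛 ⊗ₖ (1 : Matrix (Fin d) (Fin d) ℝ)).mulVec (fun p => (r + e) p - r p))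
      = x ⬝ᵥ 𝓛.mulVec x := by
    rw [kron_quad]
    rw [Finset.sum_congr rfl (fun j _ => by rw [hw j, hsingle 𝓛 j])]
    simp
  -- ψ term
  have hψsum : (∑ i ∈ Vl, ⟪gradient ψc (projCLM N d i (r + e)) - gradient ψc (projCLM N d i r),
        projCLM N d i (r + e) - projCLM N d i r⟫)
      = c * (x ⬝ᵥ E.mulVec x) := by
    have hg : ∀ i : Fin N, ⟪gradient ψc (projCLM N d i (r + e)) - gradient ψc (projCLM N d i r),
          projCLM N d i (r + e) - projCLM N d i r⟫
        = c * ‖projCLM N d i (r + e) - projCLM N d i r‖ ^ 2 := by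
      intro i
      rw [hψc, gradient_quad c _, gradient_quad c _, ← smul_sub, real_inner_smul_left,
        real_inner_self_eq_norm_sq]
    rw [Finset.sum_congr rfl fun i _ => hg i, ← Finset.mul_sum]
    congr 1
    rw [sum_proj_norm Vl (r + e) r, ← hE]
    rw [Finset.sum_congr rfl (fun j _ => by rw [hw j, hsingle E j])]
    simp
  -- norm term
  have hn : ‖(r + e) - r‖ ^ 2 = x ⬝ᵥ x := by
    rw [norm_sq_eq (r + e) r]
    have hsingle' : ∀ j : Fin d,
        ((fun i => if j = 0 then x i else 0) ⬝ᵥ (fun i => if j = 0 then x i else 0))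
          = if j = 0 then x ⬝ᵥ x else 0 := fun j => by
      by_cases hj : j = 0 <;> simp [hj, dotProduct]
    rw [Finset.sum_congr rfl (fun j _ => by rw [hw j, hsingle' j])]
    simp
  rw [hk, hψsum, hn] at h12
  rw [quad_add]
  exact h12


/-- `f ∈ S(m,L)` for every `ψ ∈ S(m_ψ,L_ψ)` iff
`m I ⪯ 𝓛 + m_ψ E` and `𝓛 + L_ψ E ⪯ L I`, where `E` is the indicator of `𝓥_l`. -/
theorem stmt3 {N d : ℕ} [NeZero N] [NeZero d]
    (𝓛 : Matrix (Fin N) (Fin N) ℝ) (h𝓛sym : 𝓛.IsSymm) (h𝓛psd : 𝓛.PosSemidef)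
    (Vl : Finset (Fin N)) (r : EuclideanSpace ℝ (Fin N × Fin d))
    (mψ Lψ m L : ℝ) (hmψ : 0 < mψ) (hmLψ : mψ ≤ Lψ) (hm : 0 < m) (hmL : m ≤ L)
    (E : Matrix (Fin N) (Fin N) ℝ)
    (hE : E = Matrix.diagonal fun i => if i ∈ Vl then (1 : ℝ) else 0) :
    (∀ ψ : EuclideanSpace ℝ (Fin d) → ℝ, memS mψ Lψ ψ → memS m L (bigf 𝓛 r Vl ψ)) ↔
      ((𝓛 + mψ • E) - m • (1 : Matrix (Fin N) (Fin N) ℝ)).PosSemidef ∧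
      (L • (1 : Matrix (Fin N) (Fin N) ℝ) - (𝓛 + Lψ • E)).PosSemidef := by
  constructor
  · intro h
    have hermE : E.IsHermitian := by
      rw [hE]; exact Matrix.isHermitian_diagonal _
    have herm1 : (1 : Matrix (Fin N) (Fin N) ℝ).IsHermitian := Matrix.isHermitian_one
    constructor
    · refine posSemidef_iff_dotProduct_mulVec.2 ⟨?_, ?_⟩
      · show _ᴴ = _
        simp [Matrix.conjTranspose_sub, Matrix.conjTranspose_add, Matrix.conjTranspose_smul,
          h𝓛psd.1.eq, hermE.eq]
        rw [h𝓛sym.eq, show Eᵀ = E from hE ▸ Matrix.diagonal_transpose _]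
      · intro x
        have hq := forward_quad 𝓛 h𝓛sym Vl r E hE mψ m L
          (h _ (memS_quad mψ mψ Lψ le_rfl hmLψ)) x
        simp only [star_trivial]
        rw [Matrix.sub_mulVec, dotProduct_sub, Matrix.smul_mulVec,
          Matrix.one_mulVec, dotProduct_smul, smul_eq_mul]
        linarith [hq.1]
    · refine posSemidef_iff_dotProduct_mulVec.2 ⟨?_, ?_⟩
      · show _ᴴ = _
        simp [Matrix.conjTranspose_sub, Matrix.conjTranspose_add, Matrix.conjTranspose_smul,
          h𝓛psd.1.eq, hermE.eq]
        rw [h𝓛sym.eq, show Eᵀ = E from hE ▸ Matrix.diagonal_transpose _]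
      · intro x
        have hq := forward_quad 𝓛 h𝓛sym Vl r E hE Lψ m L
          (h _ (memS_quad Lψ mψ Lψ hmLψ le_rfl)) x
        simp only [star_trivial]
        rw [Matrix.sub_mulVec, dotProduct_sub, Matrix.smul_mulVec,
          Matrix.one_mulVec, dotProduct_smul, smul_eq_mul]
        linarith [hq.2]
  · rintro ⟨h1, h2⟩ ψ hψ
    exact backward 𝓛 h𝓛sym Vl r mψ Lψ m L E hE h1 h2 ψ hψ
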